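/- Let f : ℕ → ℝ, and define the infinite lower/upper triangular matrices H = (H_{j,n}) with H_{j,n} = h_{n-j}(f(1),...,f(j)) and E = ((-1)^{j+n} e_{n-j}(f(1),...,f(n-1))), indexed by j,n ∈ ℕ. Then H and E are inverse matrices: for all j, n', ∑_{m} H_{j,m} · (-1)^{m+n'} e_{n'-m}(f(1),...,f(n'-1)) = δ_{j,n'}. -/

import Mathlib

/-- The `r`-th complete homogeneous symmetric polynomial in the variables
`x 1, …, x k`. -/
def hsymmF {R : Type*} [CommRing R] (x : ℕ → R) (k r : ℕ) : R :=
  ∑ c ∈ Finset.Nat.antidiagonalTuple k r, ∏ i : Fin k, x ((i : ℕ) + 1) ^ c i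

/-- The `r`-th elementary symmetric polynomial in the variables `x 1, …, x k`. -/
def esymmF {R : Type*} [CommRing R] (x : ℕ → R) (k r : ℕ) : R :=
  ∑ s ∈ (Finset.range k).powersetCard r, ∏ i ∈ s, x (i + 1)

lemma hsymmF_zero (x : ℕ → ℝ) (k : ℕ) : hsymmF x k 0 = 1 := by
  simp [hsymmF, Finset.Nat.antidiagonalTuple_zero_right]

lemma hsymmF_zero_succ (x : ℕ → ℝ) (r : ℕ) : hsymmF x 0 (r + 1) = 0 := by
  simp [hsymmF, Finset.Nat.antidiagonalTuple_zero_succ]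

lemma hsymmF_succ (x : ℕ → ℝ) (k r : ℕ) :
    hsymmF x (k + 1) r = ∑ p ∈ Finset.HasAntidiagonal.antidiagonal r, hsymmF x k p.1 * x (k + 1) ^ p.2 := by
  unfold hsymmF
  simp_rw [Finset.sum_mul]
  have hs := Finset.sum_sigma' (Finset.HasAntidiagonal.antidiagonal r)
    (fun p => Finset.Nat.antidiagonalTuple k p.1)
    (fun p c => (∏ i : Fin k, x ((i : ℕ) + 1) ^ c i) * x (k + 1) ^ p.2)
  rw [hs]
  refine Finset.sum_nbij' (fun c => ⟨(∑ i : Fin k, c i.castSucc, c (Fin.last k)), Fin.init c⟩)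
    (fun q => Fin.snoc q.2 q.1.2) ?_ ?_ ?_ ?_ ?_
  · intro c hc
    rw [Finset.Nat.mem_antidiagonalTuple] at hc
    simp only [Finset.mem_sigma, Finset.HasAntidiagonal.mem_antidiagonal, Finset.Nat.mem_antidiagonalTuple]
    refine ⟨by rw [← hc, Fin.sum_univ_castSucc], ?_⟩
    exact Finset.sum_congr rfl fun i _ => by simp [Fin.init]
  · rintro ⟨⟨a, b⟩, c⟩ hq
    rw [Finset.mem_sigma, Finset.HasAntidiagonal.mem_antidiagonal, Finset.Nat.mem_antidiagonalTuple] at hq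
    rw [Finset.Nat.mem_antidiagonalTuple]
    simp only [Fin.sum_univ_castSucc, Fin.snoc_castSucc, Fin.snoc_last]
    rw [hq.2]; exact hq.1
  · intro c hc
    simp only [Fin.snoc_init_self]
  · rintro ⟨⟨a, b⟩, c⟩ hq
    rw [Finset.mem_sigma, Finset.HasAntidiagonal.mem_antidiagonal, Finset.Nat.mem_antidiagonalTuple] at hq
    simp only [Fin.snoc_last, Fin.init_snoc, Fin.snoc_castSucc]
    rw [hq.2]
  · intro c hc
    simp [Fin.prod_univ_castSucc, Fin.init]

lemma hsymmF_rec (x : ℕ → ℝ) (k r : ℕ) :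
    hsymmF x (k + 1) (r + 1) = hsymmF x k (r + 1) + x (k + 1) * hsymmF x (k + 1) r := by
  rw [hsymmF_succ, hsymmF_succ, Finset.Nat.sum_antidiagonal_succ']
  simp only [pow_zero, mul_one, pow_succ, Finset.mul_sum]
  ring_nf
  congr 1
  exact Finset.sum_congr rfl fun p _ => by ring

lemma esymmF_zero (x : ℕ → ℝ) (k : ℕ) : esymmF x k 0 = 1 := by
  simp [esymmF]

lemma esymmF_eq_zero (x : ℕ → ℝ) {k r : ℕ} (h : k < r) : esymmF x k r = 0 := by
  rw [esymmF, Finset.powersetCard_eq_empty.2 (by simpa using h), Finset.sum_empty]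

lemma esymmF_rec (x : ℕ → ℝ) (k r : ℕ) :
    esymmF x (k + 1) (r + 1) = esymmF x k (r + 1) + x (k + 1) * esymmF x k r := by
  unfold esymmF
  rw [Finset.range_add_one, Finset.powersetCard_succ_insert (Finset.notMem_range_self),
    Finset.sum_union, Finset.sum_image]
  · congr 1
    rw [Finset.mul_sum]
    refine Finset.sum_congr rfl fun s hs => ?_
    rw [Finset.mem_powersetCard] at hs
    rw [Finset.prod_insert (fun hk => Finset.notMem_range_self (hs.1 hk))]
  · intro s hs t ht hst
    rw [Finset.mem_coe, Finset.mem_powersetCard] at hs ht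
    have hks : k ∉ s := fun hk => Finset.notMem_range_self (hs.1 hk)
    have hkt : k ∉ t := fun hk => Finset.notMem_range_self (ht.1 hk)
    have := congrArg (Finset.erase · k) hst
    simpa [Finset.erase_insert hks, Finset.erase_insert hkt] using this
  · rw [Finset.disjoint_right]
    rintro s hs hs'
    rw [Finset.mem_image] at hs
    obtain ⟨t, ht, rfl⟩ := hs
    rw [Finset.mem_powersetCard] at hs'
    exact Finset.notMem_range_self (hs'.1 (Finset.mem_insert_self k t))

/-- Peeling the `k = 0` term and using the `esymmF` recursion. -/
lemma split_e (x : ℕ → ℝ) (N m : ℕ) (g : ℕ → ℝ) :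
    ∑ k ∈ Finset.range (m + 2), (-1 : ℝ) ^ k * esymmF x (N + 1) k * g k
      = ∑ k ∈ Finset.range (m + 2), (-1 : ℝ) ^ k * esymmF x N k * g k
        - x (N + 1) * ∑ k ∈ Finset.range (m + 1), (-1 : ℝ) ^ k * esymmF x N k * g (k + 1) := by
  rw [Finset.sum_range_succ' (fun k => (-1 : ℝ) ^ k * esymmF x (N + 1) k * g k) (m + 1),
      Finset.sum_range_succ' (fun k => (-1 : ℝ) ^ k * esymmF x N k * g k) (m + 1),
      Finset.mul_sum]
  have h : ∀ k, ((-1 : ℝ)) ^ (k + 1) * esymmF x (N + 1) (k + 1) * g (k + 1)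
      = (-1 : ℝ) ^ (k + 1) * esymmF x N (k + 1) * g (k + 1)
        - x (N + 1) * ((-1 : ℝ) ^ k * esymmF x N k * g (k + 1)) := by
    intro k; rw [esymmF_rec]; ring
  simp only [h, esymmF_zero, Finset.sum_sub_distrib]
  ring

/-- `U(m+1) = T_N(m+1) + x_{N+1} U(m)`. -/
lemma U_rec (x : ℕ → ℝ) (N m : ℕ) :
    ∑ k ∈ Finset.range (m + 2), (-1 : ℝ) ^ k * esymmF x N k * hsymmF x (N + 1) (m + 1 - k)
      = ∑ k ∈ Finset.range (m + 2), (-1 : ℝ) ^ k * esymmF x N k * hsymmF x N (m + 1 - k)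
        + x (N + 1) *
          ∑ k ∈ Finset.range (m + 1), (-1 : ℝ) ^ k * esymmF x N k * hsymmF x (N + 1) (m - k) := by
  rw [Finset.sum_range_succ, Finset.sum_range_succ
    (fun k => (-1 : ℝ) ^ k * esymmF x N k * hsymmF x N (m + 1 - k)) (m + 1), Finset.mul_sum]
  have h : ∀ k ∈ Finset.range (m + 1),
      (-1 : ℝ) ^ k * esymmF x N k * hsymmF x (N + 1) (m + 1 - k)
        = (-1 : ℝ) ^ k * esymmF x N k * hsymmF x N (m + 1 - k)
          + x (N + 1) * ((-1 : ℝ) ^ k * esymmF x N k * hsymmF x (N + 1) (m - k)) := by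
    intro k hk
    rw [Finset.mem_range] at hk
    have hk' : k ≤ m := Nat.lt_succ_iff.mp hk
    rw [show m + 1 - k = m - k + 1 from by omega, hsymmF_rec]
    ring
  rw [Finset.sum_congr rfl h, Finset.sum_add_distrib]
  simp only [Nat.sub_self, hsymmF_zero]
  ring

/-- `T_N(r+1) = 0`: the classical identity in equal variable sets. -/
lemma T_zero (x : ℕ → ℝ) : ∀ N r : ℕ,
    ∑ k ∈ Finset.range (r + 2), (-1 : ℝ) ^ k * esymmF x N k * hsymmF x N (r + 1 - k) = 0 := by
  intro N
  induction N with
  | zero =>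
    intro r
    rw [Finset.sum_range_succ' (fun k => (-1 : ℝ) ^ k * esymmF x 0 k * hsymmF x 0 (r + 1 - k))
      (r + 1)]
    have h : ∀ k ∈ Finset.range (r + 1),
        (-1 : ℝ) ^ (k + 1) * esymmF x 0 (k + 1) * hsymmF x 0 (r + 1 - (k + 1)) = 0 := by
      intro k _; rw [esymmF_eq_zero x (Nat.succ_pos k)]; ring
    rw [Finset.sum_congr rfl h]
    simp [hsymmF_zero_succ]
  | succ N ih =>
    intro r
    rw [split_e x N r (fun k => hsymmF x (N + 1) (r + 1 - k))]
    have h2 : ∑ k ∈ Finset.range (r + 1), (-1 : ℝ) ^ k * esymmF x N k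
        * hsymmF x (N + 1) (r + 1 - (k + 1))
        = ∑ k ∈ Finset.range (r + 1), (-1 : ℝ) ^ k * esymmF x N k * hsymmF x (N + 1) (r - k) :=
      Finset.sum_congr rfl fun k _ => by rw [Nat.succ_sub_succ]
    rw [h2, U_rec x N r, ih r]
    ring

/-- The key vanishing: `e` in `N` variables, `h` in `j ≤ N` variables, degree `r > N - j`. -/
lemma S_zero (x : ℕ → ℝ) (j : ℕ) : ∀ N, j ≤ N → ∀ r, N - j < r →
    ∑ k ∈ Finset.range (r + 1), (-1 : ℝ) ^ k * esymmF x N k * hsymmF x j (r - k) = 0 := by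
  refine Nat.le_induction ?_ ?_
  · intro r hr
    rw [Nat.sub_self] at hr
    obtain ⟨m, rfl⟩ := Nat.exists_eq_add_of_lt hr
    simpa using T_zero x j m
  · intro N hj ih r hr
    have h2 : 2 ≤ r := by omega
    obtain ⟨m, rfl⟩ : ∃ m, r = m + 2 := ⟨r - 2, by omega⟩
    rw [show m + 2 + 1 = (m + 1) + 2 from rfl,
      split_e x N (m + 1) (fun k => hsymmF x j (m + 2 - k))]
    have e1 : ∑ k ∈ Finset.range (m + 1 + 2), (-1 : ℝ) ^ k * esymmF x N k
        * hsymmF x j (m + 2 - k) = 0 := by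
      have := ih (m + 2) (by omega)
      simpa using this
    have e2 : ∑ k ∈ Finset.range (m + 2), (-1 : ℝ) ^ k * esymmF x N k
        * hsymmF x j (m + 2 - (k + 1)) = 0 := by
      have h3 : ∑ k ∈ Finset.range (m + 2), (-1 : ℝ) ^ k * esymmF x N k
          * hsymmF x j (m + 2 - (k + 1))
          = ∑ k ∈ Finset.range (m + 2), (-1 : ℝ) ^ k * esymmF x N k
            * hsymmF x j (m + 1 - k) :=
        Finset.sum_congr rfl fun k _ => by rw [Nat.succ_sub_succ]
      rw [h3]
      exact ih (m + 1) (by omega)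
    rw [e1, e2]
    ring


/-- `H f j n = h_{n-j}(f 1, …, f j)`, and `0` when `n < j`. -/
noncomputable def Hf (f : ℕ → ℝ) (j n : ℕ) : ℝ :=
  if n < j then 0 else hsymmF f j (n - j)

/-- `E f j n = e_{n-j}(f 1, …, f (n-1))`, and `0` when `n < j`. -/
noncomputable def Ef (f : ℕ → ℝ) (j n : ℕ) : ℝ :=
  if n < j then 0 else esymmF f (n - 1) (n - j)

/-- The matrices `H = (H_{j,n})` and `E = ((-1)^{j+n} E_{j,n})` are inverse to each
other: the `(j, n')` entry of their product is `δ_{j,n'}`.  (Only the terms with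
`j ≤ m ≤ n'` contribute to the sum.) -/
theorem Hf_Ef_inverse (f : ℕ → ℝ) (j n' : ℕ) :
    ∑ m ∈ Finset.range (n' + 1), Hf f j m * ((-1 : ℝ) ^ (m + n') * Ef f m n') =
      if j = n' then 1 else 0 := by
  rcases lt_trichotomy j n' with hlt | rfl | hgt
  · -- j < n'
    rw [if_neg (Nat.ne_of_lt hlt)]
    obtain ⟨d, rfl⟩ : ∃ d, n' = j + d + 1 := ⟨n' - j - 1, by omega⟩
    have key := S_zero f j (j + d) (by omega) (d + 1) (by omega)
    rw [← key]
    rw [← Finset.sum_range_reflect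
      (fun m => Hf f j m * ((-1 : ℝ) ^ (m + (j + d + 1)) * Ef f m (j + d + 1))) (j + d + 1 + 1)]
    rw [← Finset.sum_subset (Finset.range_subset_range.2 (show d + 1 + 1 ≤ j + d + 1 + 1 by omega))]
    · refine Finset.sum_congr rfl fun k hk => ?_
      rw [Finset.mem_range, Nat.lt_succ_iff] at hk
      have h1 : j + d + 1 + 1 - 1 - k = j + d + 1 - k := by omega
      rw [h1, Hf, Ef, if_neg (by omega), if_neg (by omega)]
      have h2 : j + d + 1 - k - j = d + 1 - k := by omega
      have h3 : j + d + 1 - (j + d + 1 - k) = k := by omega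
      have h3' : j + d + 1 - 1 = j + d := by omega
      rw [h2, h3, h3']
      have h4 : (-1 : ℝ) ^ (j + d + 1 - k + (j + d + 1)) = (-1 : ℝ) ^ k := by
        rcases Nat.even_or_odd k with ⟨t, ht⟩ | ⟨t, ht⟩
        · rw [Even.neg_one_pow ⟨j + d + 1 - t, by omega⟩, Even.neg_one_pow ⟨t, ht⟩]
        · rw [Odd.neg_one_pow ⟨j + d - t, by omega⟩, Odd.neg_one_pow ⟨t, by omega⟩]
      rw [h4]
      ring
    · intro m hm hm2
      rw [Finset.mem_range, Nat.lt_succ_iff] at hm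
      rw [Finset.mem_range, Nat.lt_succ_iff, not_le] at hm2
      have : j + d + 1 + 1 - 1 - m < j := by omega
      rw [Hf, if_pos this]
      ring
  · -- j = n'
    rw [if_pos rfl, Finset.sum_range_succ]
    have h0 : ∀ m ∈ Finset.range j, Hf f j m * ((-1 : ℝ) ^ (m + j) * Ef f m j) = 0 := by
      intro m hm
      rw [Finset.mem_range] at hm
      rw [Hf, if_pos hm]; ring
    rw [Finset.sum_eq_zero h0, Hf, Ef, if_neg (lt_irrefl j), if_neg (lt_irrefl j),
      Nat.sub_self, hsymmF_zero, esymmF_zero]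
    have : (-1 : ℝ) ^ (j + j) = 1 := by
      rw [← two_mul, pow_mul]; simp
    rw [this]; ring
  · -- j > n'
    rw [if_neg (by omega)]
    refine Finset.sum_eq_zero fun m hm => ?_
    rw [Finset.mem_range, Nat.lt_succ_iff] at hm
    rw [Hf, if_pos (by omega)]
    ring
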